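/- arXiv:2512.09064 — 2 statements merged into one kernel-verified Lean document; each statement's English description precedes it below -/
import Mathlib

section
/- Let M be a magma and let S be a closure system of congruences on M such that for all θ, φ ∈ S the S-join of θ and φ equals, as a binary relation, the composition θ ∘ φ. Then for every finite nonempty subset Y of S, the S-join of Y (the least element of S containing every member of Y) is contained in the supremum of Y taken in the full congruence lattice of M. -/
/-- The finite-join step in the proof of the paper's main theorem: if in a
closure system `S` of congruences all binary `S`-joins are given by relation
composition, then the `S`-join of every finite nonempty subset `Y` of `S` is
contained in the supremum of `Y` in the full congruence lattice. -/
theorem sJoin_finset_le_sSup {M : Type*} [Mul M] (S : Set (Con M))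
    (hS : ∀ T ⊆ S, sInf T ∈ S)
    (hcomp : ∀ θ ∈ S, ∀ φ ∈ S, ∀ a b : M,
      (sInf {ψ | ψ ∈ S ∧ θ ≤ ψ ∧ φ ≤ ψ}) a b ↔ ∃ c, θ a c ∧ φ c b) :
    ∀ Y ⊆ S, Y.Finite → Y.Nonempty →
      sInf {ψ | ψ ∈ S ∧ ∀ θ ∈ Y, θ ≤ ψ} ≤ sSup Y := by
  intro Y hYS hYfin
  revert hYS
  refine Set.Finite.induction_on (motive := fun Y _ => Y ⊆ S → Y.Nonempty →
      sInf {ψ | ψ ∈ S ∧ ∀ θ ∈ Y, θ ≤ ψ} ≤ sSup Y) Y hYfin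
    (fun _ h => absurd rfl h.ne_empty) ?_
  intro θ Y' hθY' hY'fin ih hYS _
  have hθS : θ ∈ S := hYS (Set.mem_insert θ Y')
  have hY'S : Y' ⊆ S := fun x hx => hYS (Set.mem_insert_of_mem θ hx)
  rcases Y'.eq_empty_or_nonempty with h | hne
  · subst h
    have hθmem : θ ∈ {ψ | ψ ∈ S ∧ ∀ φ ∈ insert θ (∅ : Set (Con M)), φ ≤ ψ} := by
      refine ⟨hθS, ?_⟩
      intro φ hφ
      rcases hφ with rfl | h
      · exact le_refl _
      · exact absurd h (Set.notMem_empty φ)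
    exact le_trans (sInf_le hθmem) (le_sSup (Set.mem_insert θ ∅))
  · -- J' : the S-join of Y'
    set J' : Con M := sInf {ψ | ψ ∈ S ∧ ∀ φ ∈ Y', φ ≤ ψ} with hJ'
    have hJ'S : J' ∈ S := hS _ (fun x hx => hx.1)
    have hJ'le : J' ≤ sSup Y' := ih hY'S hne
    have hle : ∀ φ ∈ Y', φ ≤ J' := by
      intro φ hφ
      exact le_sInf (fun ψ hψ => hψ.2 φ hφ)
    have hsets : {ψ | ψ ∈ S ∧ θ ≤ ψ ∧ J' ≤ ψ}
        = {ψ | ψ ∈ S ∧ ∀ φ ∈ insert θ Y', φ ≤ ψ} := by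
      ext ψ
      constructor
      · rintro ⟨h1, h2, h3⟩
        refine ⟨h1, ?_⟩
        rintro φ (rfl | hφ)
        · exact h2
        · exact le_trans (hle φ hφ) h3
      · rintro ⟨h1, h2⟩
        exact ⟨h1, h2 θ (Set.mem_insert θ Y'),
          sInf_le ⟨h1, fun φ hφ => h2 φ (Set.mem_insert_of_mem θ hφ)⟩⟩
    intro a b hab
    rw [← hsets] at hab
    obtain ⟨c, hac, hcb⟩ := (hcomp θ hθS J' hJ'S a b).mp hab
    have h1 : sSup (insert θ Y') a c :=
      le_sSup (Set.mem_insert θ Y') hac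
    have h2 : sSup (insert θ Y') c b :=
      le_trans hJ'le (sSup_le_sSup (Set.subset_insert θ Y')) hcb
    exact (sSup (insert θ Y')).trans h1 h2
end

section
/- Let M be a magma and let S be a closure system of congruences on M satisfying: (i) the least element of S is the identity (diagonal) congruence on M; (ii) for all θ, φ ∈ S, the S-join of θ and φ equals, as a binary relation, the composition θ ∘ φ; and (iii) for every subset X of S and all a, b in M, if the pair (a, b) belongs to the S-join of X then there exists a finite subset Y of X with (a, b) in the S-join of Y. Then for every subset X of S, the S-join of X equals the supremum of X in the full congruence lattice of M; consequently, the supremum in the full congruence lattice of every subset of S belongs to S, i.e., S is a complete sublattice of the congruence lattice of M. -/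
/-- The lattice-theoretic content of the paper's main theorem (Theorem 3):
if `S` is a closure system of congruences on a magma whose least element is
the identity congruence, whose binary `S`-joins are given by relation
composition, and whose `S`-joins are "finitary" on pairs, then `S`-joins agree
with suprema in the full congruence lattice, so `S` is a complete sublattice
of the congruence lattice. -/
theorem sJoin_eq_sSup_of_perm {M : Type*} [Mul M] (S : Set (Con M))
    (hS : ∀ T ⊆ S, sInf T ∈ S)
    (hbot : ∀ a b : M, (sInf S) a b ↔ a = b)
    (hcomp : ∀ θ ∈ S, ∀ φ ∈ S, ∀ a b : M,
      (sInf {ψ | ψ ∈ S ∧ θ ≤ ψ ∧ φ ≤ ψ}) a b ↔ ∃ c, θ a c ∧ φ c b)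
    (hfin : ∀ X ⊆ S, ∀ a b : M,
      (sInf {ψ | ψ ∈ S ∧ ∀ θ ∈ X, θ ≤ ψ}) a b →
        ∃ Y ⊆ X, Y.Finite ∧ (sInf {ψ | ψ ∈ S ∧ ∀ θ ∈ Y, θ ≤ ψ}) a b) :
    ∀ X ⊆ S, sInf {ψ | ψ ∈ S ∧ ∀ θ ∈ X, θ ≤ ψ} = sSup X ∧ sSup X ∈ S := by
  have hJS : ∀ X : Set (Con M), sInf {ψ | ψ ∈ S ∧ ∀ θ ∈ X, θ ≤ ψ} ∈ S :=
    fun X => hS _ (fun ψ hψ => hψ.1)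
  have hle : ∀ X : Set (Con M), ∀ θ ∈ X, θ ≤ sInf {ψ | ψ ∈ S ∧ ∀ θ ∈ X, θ ≤ ψ} :=
    fun X θ hθ => le_sInf fun ψ hψ => hψ.2 θ hθ
  have hfinle : ∀ Y : Set (Con M), Y.Finite → Y ⊆ S →
      sInf {ψ | ψ ∈ S ∧ ∀ θ ∈ Y, θ ≤ ψ} ≤ sSup Y := by
    intro Y hY
    refine Set.Finite.induction_on (motive := fun Y _ => Y ⊆ S → sInf {ψ | ψ ∈ S ∧ ∀ θ ∈ Y, θ ≤ ψ} ≤ sSup Y) Y hY ?_ ?_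
    · intro _
      have hempty : {ψ : Con M | ψ ∈ S ∧ ∀ θ ∈ (∅ : Set (Con M)), θ ≤ ψ} = S := by
        ext ψ; simp
      rw [hempty]
      rw [Con.le_def]
      intro a b hab
      rw [hbot a b] at hab
      subst hab
      exact (sSup (∅ : Set (Con M))).refl a
    · rintro θ Y' hθ hYfin ih hsub
      have hθS : θ ∈ S := hsub (Set.mem_insert _ _)
      have hY'S : Y' ⊆ S := fun x hx => hsub (Set.mem_insert_of_mem _ hx)
      have hset : {ψ | ψ ∈ S ∧ ∀ φ ∈ insert θ Y', φ ≤ ψ}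
          = {ψ | ψ ∈ S ∧ θ ≤ ψ ∧ sInf {ψ | ψ ∈ S ∧ ∀ θ ∈ Y', θ ≤ ψ} ≤ ψ} := by
        ext ψ
        constructor
        · rintro ⟨h1, h2⟩
          exact ⟨h1, h2 θ (Set.mem_insert _ _),
            sInf_le ⟨h1, fun φ hφ => h2 φ (Set.mem_insert_of_mem _ hφ)⟩⟩
        · rintro ⟨h1, h2, h3⟩
          refine ⟨h1, ?_⟩
          rintro φ hφ
          rcases hφ with rfl | hφ
          · exact h2
          · exact le_trans (hle Y' φ hφ) h3
      rw [hset, Con.le_def]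
      intro a b hab
      obtain ⟨c, h1, h2⟩ :=
        (hcomp θ hθS _ (hJS Y') a b).mp hab
      have hsup' : sSup Y' ≤ sSup (insert θ Y') := sSup_le_sSup (Set.subset_insert _ _)
      exact (sSup (insert θ Y')).trans
        (Con.le_def.mp (le_sSup (Set.mem_insert _ _)) h1)
        (Con.le_def.mp hsup' (Con.le_def.mp (ih hY'S) h2))
  intro X hX
  have h1 : sInf {ψ | ψ ∈ S ∧ ∀ θ ∈ X, θ ≤ ψ} = sSup X := by
    apply le_antisymm
    · rw [Con.le_def]
      intro a b hab
      obtain ⟨Y, hYX, hYfin, hY⟩ := hfin X hX a b hab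
      exact Con.le_def.mp (sSup_le_sSup hYX)
        (Con.le_def.mp (hfinle Y hYfin (hYX.trans hX)) hY)
    · exact sSup_le (hle X)
  exact ⟨h1, h1 ▸ hJS X⟩
end
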